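/- Let A be a commutative ring, f ∈ A, and e ≥ 1, l ≥ 1 integers. In S := A[X,Y,t]/( XY − f·t^e, t^{l+1} ) one has XY·t^l = 0, and the A[X,Y]-linear map A[X,Y] → S sending g to t^l·g (image of g) kills the ideal (XY) and induces an injective A[X,Y]/(XY)-module homomorphism A[X,Y]/(XY) → S whose image is exactly the ideal of S generated by t^l. In other words, the ideal (t^l) ⊆ S is a free A[X,Y]/(XY)-module of rank one with generator t^l. -/

import Mathlib

open MvPolynomial

/-- The ideal defining `S = A[X,Y,t]/(XY − f·t^e, t^{l+1})`, with
`X = X 0`, `Y = X 1`, `t = X 2`. -/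
noncomputable def stmt9I (A : Type*) [CommRing A] (f : A) (e l : ℕ) :
    Ideal (MvPolynomial (Fin 3) A) :=
  Ideal.span {X 0 * X 1 - C f * (X 2) ^ e, (X 2) ^ (l + 1)}

noncomputable def psi9 (A : Type*) [CommRing A] :
    MvPolynomial (Fin 3) A →ₐ[A] Polynomial (MvPolynomial (Fin 2) A) :=
  (MvPolynomial.finSuccEquiv A 2).toAlgHom.comp (rename ![1, 2, 0])

section aux
variable {A : Type*} [CommRing A]

lemma psi9_X0 : psi9 A (X 0) = Polynomial.C (X 0) := by
  have h : (![1, 2, 0] : Fin 3 → Fin 3) 0 = Fin.succ 0 := rfl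
  simp only [psi9, AlgHom.coe_comp, Function.comp_apply, rename_X, h,
    AlgEquiv.toAlgHom_eq_coe, AlgHom.coe_coe, finSuccEquiv_X_succ]
  exact finSuccEquiv_X_succ

lemma psi9_X1 : psi9 A (X 1) = Polynomial.C (X 1) := by
  have h : (![1, 2, 0] : Fin 3 → Fin 3) 1 = Fin.succ 1 := rfl
  simp only [psi9, AlgHom.coe_comp, Function.comp_apply, rename_X, h,
    AlgEquiv.toAlgHom_eq_coe, AlgHom.coe_coe, finSuccEquiv_X_succ]
  exact finSuccEquiv_X_succ

lemma psi9_X2 : psi9 A (X 2) = Polynomial.X := by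
  have h : (![1, 2, 0] : Fin 3 → Fin 3) 2 = 0 := rfl
  simp only [psi9, AlgHom.coe_comp, Function.comp_apply, rename_X, h,
    AlgEquiv.toAlgHom_eq_coe, AlgHom.coe_coe, finSuccEquiv_X_zero]
  exact finSuccEquiv_X_zero

lemma psi9_C (a : A) : psi9 A (C a) = Polynomial.C (C a) := by
  simp [psi9]

lemma psi9_rename (g : MvPolynomial (Fin 2) A) :
    psi9 A (rename (Fin.castSucc : Fin 2 → Fin 3) g) = Polynomial.C g := by
  induction g using MvPolynomial.induction_on with
  | C a => simp [psi9_C]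
  | add p q hp hq => simp [map_add, hp, hq]
  | mul_X p i hp =>
    rw [map_mul, map_mul, hp, rename_X, map_mul]
    refine congrArg (HMul.hMul _) ?_
    fin_cases i
    · exact psi9_X0
    · exact psi9_X1

lemma inj9 (f : A) (e l : ℕ) (he : 1 ≤ e) (hl : 1 ≤ l) (g : MvPolynomial (Fin 2) A)
    (hg : (X 2 : MvPolynomial (Fin 3) A) ^ l * rename (Fin.castSucc : Fin 2 → Fin 3) g
      ∈ stmt9I A f e l) :
    g ∈ Ideal.span {(X 0 : MvPolynomial (Fin 2) A) * X 1} := by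
  rw [stmt9I, Ideal.mem_span_pair] at hg
  obtain ⟨p, q, hpq⟩ := hg
  have H := congrArg (psi9 A) hpq
  simp only [map_add, map_mul, map_sub, map_pow, psi9_X0, psi9_X1, psi9_X2, psi9_C,
    psi9_rename] at H
  set P := psi9 A p with hP
  set Q := psi9 A q with hQ
  have H' : Polynomial.C ((X 0 : MvPolynomial (Fin 2) A) * X 1) * P
      - Polynomial.C (C f) * (P * Polynomial.X ^ e) + Q * Polynomial.X ^ (l + 1)
      = Polynomial.C g * Polynomial.X ^ l := by
    rw [map_mul]; linear_combination H
  have Hc : ∀ j : ℕ, ((X 0 : MvPolynomial (Fin 2) A) * X 1) * P.coeff j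
      - C f * (if e ≤ j then P.coeff (j - e) else 0)
      + (if l + 1 ≤ j then Q.coeff (j - (l + 1)) else 0)
      = if l ≤ j then (Polynomial.C g).coeff (j - l) else 0 := by
    intro j
    have h2 := congrArg (fun r => Polynomial.coeff r j) H'
    simpa only [Polynomial.coeff_add, Polynomial.coeff_sub, Polynomial.coeff_C_mul,
      Polynomial.coeff_mul_X_pow'] using h2
  have hreg : IsLeftRegular ((X 0 : MvPolynomial (Fin 2) A) * X 1) :=
    (isRegular_X.mul isRegular_X).left
  have hP0 : ∀ j, j < l → P.coeff j = 0 := by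
    intro j
    induction j using Nat.strong_induction_on with
    | _ j ih =>
      intro hj
      have h2 := Hc j
      rw [if_neg (by omega : ¬ l ≤ j), if_neg (by omega : ¬ l + 1 ≤ j)] at h2
      have h3 : (if e ≤ j then P.coeff (j - e) else 0) = 0 := by
        split
        · exact ih (j - e) (by omega) (by omega)
        · rfl
      rw [h3, mul_zero, sub_zero, add_zero] at h2
      exact hreg (by simpa using h2)
  have hl2 := Hc l
  rw [if_pos (le_refl l), if_neg (by omega : ¬ l + 1 ≤ l), Nat.sub_self, add_zero,
    Polynomial.coeff_C_zero] at hl2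
  have h3 : (if e ≤ l then P.coeff (l - e) else 0) = 0 := by
    split
    · exact hP0 (l - e) (by omega)
    · rfl
  rw [h3, mul_zero, sub_zero] at hl2
  exact Ideal.mem_span_singleton.mpr ⟨P.coeff l, hl2.symm⟩

lemma sub9 (P : MvPolynomial (Fin 3) A) :
    P - rename (Fin.castSucc : Fin 2 → Fin 3) (aeval ![X 0, X 1, 0] P)
      ∈ Ideal.span {(X 2 : MvPolynomial (Fin 3) A)} := by
  induction P using MvPolynomial.induction_on with
  | C a =>
    simp
  | add p q hp hq =>
    have := Ideal.add_mem _ hp hq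
    simpa [map_add, add_sub_add_comm] using this
  | mul_X p i hp =>
    rw [map_mul, map_mul, aeval_X]
    fin_cases i
    · have h1 : rename (Fin.castSucc : Fin 2 → Fin 3)
          ((![X 0, X 1, 0] : Fin 3 → MvPolynomial (Fin 2) A) 0) = X 0 := by simp
      rw [show ((⟨0, by omega⟩ : Fin 3)) = (0 : Fin 3) from rfl, h1]
      have := Ideal.mul_mem_right (X 0) _ hp
      simpa [sub_mul] using this
    · have h1 : rename (Fin.castSucc : Fin 2 → Fin 3)
          ((![X 0, X 1, 0] : Fin 3 → MvPolynomial (Fin 2) A) 1) = X 1 := by simp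
      rw [show ((⟨1, by omega⟩ : Fin 3)) = (1 : Fin 3) from rfl, h1]
      have := Ideal.mul_mem_right (X 1) _ hp
      simpa [sub_mul] using this
    · have h1 : rename (Fin.castSucc : Fin 2 → Fin 3)
          ((![X 0, X 1, 0] : Fin 3 → MvPolynomial (Fin 2) A) 2) = 0 := by simp
      rw [show ((⟨2, by omega⟩ : Fin 3)) = (2 : Fin 3) from rfl, h1, mul_zero, sub_zero]
      exact Ideal.mem_span_singleton.mpr ⟨p, mul_comm _ _⟩

end aux

/-- In `S = A[X,Y,t]/(XY − f·t^e, t^{l+1})` one has `XY·t^l = 0`, and the map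
`A[X,Y] → S`, `g ↦ t^l·g`, kills the ideal `(XY)`, has kernel exactly `(XY)`, and
range the ideal `(t^l)`; i.e. `(t^l)` is a free `A[X,Y]/(XY)`-module of rank one
generated by `t^l`. -/
theorem stmt9 (A : Type*) [CommRing A] (f : A) (e l : ℕ) (he : 1 ≤ e) (hl : 1 ≤ l)
    (F : MvPolynomial (Fin 2) A → (MvPolynomial (Fin 3) A ⧸ stmt9I A f e l))
    (hF : ∀ g, F g = Ideal.Quotient.mk (stmt9I A f e l)
      ((X 2 : MvPolynomial (Fin 3) A) ^ l * rename (Fin.castSucc : Fin 2 → Fin 3) g)) :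
    Ideal.Quotient.mk (stmt9I A f e l)
        ((X 0 : MvPolynomial (Fin 3) A) * X 1 * (X 2) ^ l) = 0 ∧
      (∀ g ∈ Ideal.span {(X 0 : MvPolynomial (Fin 2) A) * X 1}, F g = 0) ∧
      (∀ g, F g = 0 → g ∈ Ideal.span {(X 0 : MvPolynomial (Fin 2) A) * X 1}) ∧
      Set.range F =
        ((Ideal.span {Ideal.Quotient.mk (stmt9I A f e l)
            ((X 2 : MvPolynomial (Fin 3) A) ^ l)} :
          Ideal (MvPolynomial (Fin 3) A ⧸ stmt9I A f e l)) : Set _) := by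
  have h1 : Ideal.Quotient.mk (stmt9I A f e l)
      ((X 0 : MvPolynomial (Fin 3) A) * X 1 * (X 2) ^ l) = 0 := by
    rw [Ideal.Quotient.eq_zero_iff_mem, stmt9I]
    obtain ⟨e', rfl⟩ : ∃ e', e = e' + 1 := ⟨e - 1, by omega⟩
    exact Ideal.mem_span_pair.mpr ⟨X 2 ^ l, C f * X 2 ^ e', by ring⟩
  refine ⟨h1, ?_, ?_, ?_⟩
  · intro g hg
    obtain ⟨h, rfl⟩ := Ideal.mem_span_singleton.mp hg
    rw [hF]
    have hcast0 : (Fin.castSucc (0 : Fin 2)) = (0 : Fin 3) := rfl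
    have hcast1 : (Fin.castSucc (1 : Fin 2)) = (1 : Fin 3) := rfl
    have hrw : (X 2 : MvPolynomial (Fin 3) A) ^ l
        * rename (Fin.castSucc : Fin 2 → Fin 3) (X 0 * X 1 * h)
        = (X 0 * X 1 * (X 2) ^ l) * rename (Fin.castSucc : Fin 2 → Fin 3) h := by
      rw [map_mul, map_mul, rename_X, rename_X, hcast0, hcast1]; ring
    rw [hrw, map_mul, h1, zero_mul]
  · intro g hFg
    rw [hF, Ideal.Quotient.eq_zero_iff_mem] at hFg
    exact inj9 f e l he hl g hFg
  · ext z
    simp only [Set.mem_range, SetLike.mem_coe]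
    constructor
    · rintro ⟨g, rfl⟩
      rw [hF, map_mul]
      exact Ideal.mul_mem_right _ _ (Ideal.subset_span rfl)
    · intro hz
      obtain ⟨c, hc⟩ := Ideal.mem_span_singleton'.mp hz
      obtain ⟨P, rfl⟩ := Ideal.Quotient.mk_surjective c
      refine ⟨aeval ![X 0, X 1, 0] P, ?_⟩
      rw [hF, ← hc, ← map_mul, Ideal.Quotient.eq]
      obtain ⟨h, hh⟩ := Ideal.mem_span_singleton.mp (sub9 P)
      have hrw : (X 2 : MvPolynomial (Fin 3) A) ^ l
          * rename (Fin.castSucc : Fin 2 → Fin 3) ((aeval ![X 0, X 1, 0]) P)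
          - P * X 2 ^ l = -(h * X 2 ^ (l + 1)) := by
        linear_combination (-(X 2 : MvPolynomial (Fin 3) A) ^ l) * hh
      rw [hrw]
      refine neg_mem (Ideal.mul_mem_left _ h ?_)
      rw [stmt9I]
      exact Ideal.subset_span (Set.mem_insert_iff.mpr (Or.inr rfl))
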